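/- Taylor remainder sum bound for second differences: if ρ : [0,T] → X is twice continuously differentiable and t_n = nk with (m+1)k ≤ T, then k·Σ_{n=1}^{m} ‖(ρ(t_{n+1}) − 2ρ(t_n) + ρ(t_{n-1}))/k²‖ ≤ 2·∫₀^{t_{m+1}} ‖ρ''(s)‖ ds. -/

import Mathlib

open intervalIntegral MeasureTheory

set_option maxHeartbeats 1000000 in
/-- Taylor remainder sum bound for second differences:
`k Σ_{n=1}^{m} ‖(ρ(t_{n+1}) − 2ρ(t_n) + ρ(t_{n-1}))/k²‖ ≤ 2 ∫₀^{t_{m+1}} ‖ρ''‖`. -/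
theorem stmt9 (X : Type*) [NormedAddCommGroup X] [NormedSpace ℝ X] [CompleteSpace X]
    (T k : ℝ) (hT : 0 < T) (hk : 0 < k) (m : ℕ) (hm : ((m : ℝ) + 1) * k ≤ T)
    (ρ ρ' ρ'' : ℝ → X)
    (hρ : ∀ t ∈ Set.Icc (0:ℝ) T, HasDerivAt ρ (ρ' t) t)
    (hρ' : ∀ t ∈ Set.Icc (0:ℝ) T, HasDerivAt ρ' (ρ'' t) t)
    (hcont : ContinuousOn ρ'' (Set.Icc (0:ℝ) T)) :
    k * ∑ n ∈ Finset.Icc 1 m,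
        ‖(1/k^2) • (ρ (((n:ℝ)+1)*k) - (2:ℝ) • ρ ((n:ℝ)*k) + ρ (((n:ℝ)-1)*k))‖
      ≤ 2 * ∫ s in (0:ℝ)..(((m:ℝ)+1)*k), ‖ρ'' s‖ := by
  have hmk : (0:ℝ) ≤ (m:ℝ) := Nat.cast_nonneg m
  have hρ'c : ContinuousOn ρ' (Set.Icc 0 T) := fun t ht =>
    (hρ' t ht).continuousAt.continuousWithinAt
  have hρ''c : ContinuousOn ρ'' (Set.Icc 0 T) := hcont
  -- integrability helpers
  have hsub : ∀ a b : ℝ, 0 ≤ a → 0 ≤ b → a ≤ T → b ≤ T → Set.uIcc a b ⊆ Set.Icc 0 T := by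
    intro a b ha hb haT hbT
    exact Set.uIcc_subset_Icc ⟨ha, haT⟩ ⟨hb, hbT⟩
  have hgint : ∀ a b : ℝ, 0 ≤ a → 0 ≤ b → a ≤ T → b ≤ T →
      IntervalIntegrable (fun s => ‖ρ'' s‖) volume a b := by
    intro a b ha hb haT hbT
    exact ((hρ''c.mono (hsub a b ha hb haT hbT)).norm).intervalIntegrable
  have hρ'int : ∀ a b : ℝ, 0 ≤ a → 0 ≤ b → a ≤ T → b ≤ T →
      IntervalIntegrable ρ' volume a b := by
    intro a b ha hb haT hbT
    exact (hρ'c.mono (hsub a b ha hb haT hbT)).intervalIntegrable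
  have hρ''int : ∀ a b : ℝ, 0 ≤ a → 0 ≤ b → a ≤ T → b ≤ T →
      IntervalIntegrable ρ'' volume a b := by
    intro a b ha hb haT hbT
    exact (hρ''c.mono (hsub a b ha hb haT hbT)).intervalIntegrable
  -- FTC for ρ
  have ftc1 : ∀ a b : ℝ, 0 ≤ a → a ≤ b → b ≤ T →
      ρ b - ρ a = ∫ s in a..b, ρ' s := by
    intro a b ha hab hbT
    refine (intervalIntegral.integral_eq_sub_of_hasDerivAt (fun t ht => ?_)
      (hρ'int a b ha (le_trans ha hab) (le_trans hab hbT) hbT)).symm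
    exact hρ t (Set.uIcc_subset_Icc ⟨ha, le_trans hab hbT⟩ ⟨le_trans ha hab, hbT⟩ ht)
  -- FTC for ρ'
  have ftc2 : ∀ a b : ℝ, 0 ≤ a → a ≤ b → b ≤ T →
      ρ' b - ρ' a = ∫ s in a..b, ρ'' s := by
    intro a b ha hab hbT
    refine (intervalIntegral.integral_eq_sub_of_hasDerivAt (fun t ht => ?_)
      (hρ''int a b ha (le_trans ha hab) (le_trans hab hbT) hbT)).symm
    exact hρ' t (Set.uIcc_subset_Icc ⟨ha, le_trans hab hbT⟩ ⟨le_trans ha hab, hbT⟩ ht)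
  -- per-term bound
  have hbound : ∀ n ∈ Finset.Icc 1 m,
      ‖(1/k^2) • (ρ (((n:ℝ)+1)*k) - (2:ℝ) • ρ ((n:ℝ)*k) + ρ (((n:ℝ)-1)*k))‖
        ≤ (1/k) * ∫ s in (((n:ℝ)-1)*k)..(((n:ℝ)+1)*k), ‖ρ'' s‖ := by
    intro n hn
    rw [Finset.mem_Icc] at hn
    have hn1 : (1:ℝ) ≤ (n:ℝ) := by exact_mod_cast hn.1
    have hnm : (n:ℝ) ≤ (m:ℝ) := by exact_mod_cast hn.2
    set a : ℝ := ((n:ℝ)-1)*k with ha_def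
    set b : ℝ := (n:ℝ)*k with hb_def
    set c : ℝ := ((n:ℝ)+1)*k with hc_def
    have ha0 : 0 ≤ a := by nlinarith
    have hab : a ≤ b := by nlinarith
    have hbc : b ≤ c := by nlinarith
    have hcT : c ≤ T := by nlinarith
    have hb0 : 0 ≤ b := le_trans ha0 hab
    have hc0 : 0 ≤ c := le_trans hb0 hbc
    have hbT : b ≤ T := le_trans hbc hcT
    have haT : a ≤ T := le_trans hab hbT
    have hkb : k ≤ b := by nlinarith
    -- second difference as an integral
    have h1 : ρ c - ρ b = ∫ s in b..c, ρ' s := ftc1 b c hb0 hbc hcT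
    have h2 : ρ b - ρ a = ∫ s in a..b, ρ' s := ftc1 a b ha0 hab hbT
    have h3 : (∫ s in b..c, ρ' (s - k)) = ∫ s in a..b, ρ' s := by
      rw [intervalIntegral.integral_comp_sub_right ρ' k]
      congr 1 <;> (simp only [ha_def, hb_def, hc_def]; ring)
    have hint1 : IntervalIntegrable ρ' volume b c := hρ'int b c hb0 hc0 hbT hcT
    have hint2 : IntervalIntegrable (fun s => ρ' (s - k)) volume b c := by
      have : ContinuousOn (fun s => ρ' (s - k)) (Set.uIcc b c) := by
        apply hρ'c.comp ((continuous_id.sub continuous_const).continuousOn)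
        intro s hs
        rw [Set.uIcc_of_le hbc, Set.mem_Icc] at hs
        simp only [id_eq, Set.mem_Icc, Pi.sub_apply]
        exact ⟨by linarith [hs.1], by linarith [hs.2]⟩
      exact this.intervalIntegrable
    have hdiff : ρ c - (2:ℝ) • ρ b + ρ a
        = ∫ s in b..c, (ρ' s - ρ' (s - k)) := by
      rw [intervalIntegral.integral_sub hint1 hint2, ← h1, h3, ← h2]
      module
    -- bound the integrand
    set C : ℝ := ∫ s in a..c, ‖ρ'' s‖ with hC_def
    have hib : ∀ s ∈ Set.uIoc b c, ‖ρ' s - ρ' (s - k)‖ ≤ C := by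
      intro s hs
      rw [Set.uIoc_of_le hbc] at hs
      obtain ⟨hs1, hs2⟩ := hs
      have hsk0 : 0 ≤ s - k := by nlinarith
      have hsT : s ≤ T := le_trans hs2 hcT
      rw [ftc2 (s - k) s hsk0 (by nlinarith) hsT]
      calc ‖∫ u in (s-k)..s, ρ'' u‖ ≤ ∫ u in (s-k)..s, ‖ρ'' u‖ :=
            intervalIntegral.norm_integral_le_integral_norm (by nlinarith)
        _ ≤ C := by
            apply intervalIntegral.integral_mono_interval (by nlinarith)
              (by nlinarith) (by nlinarith)
              (Filter.Eventually.of_forall fun x => norm_nonneg _)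
              (hgint a c ha0 hc0 haT hcT)
    have hnd : ‖ρ c - (2:ℝ) • ρ b + ρ a‖ ≤ C * k := by
      rw [hdiff]
      calc ‖∫ s in b..c, (ρ' s - ρ' (s - k))‖ ≤ C * |c - b| :=
            intervalIntegral.norm_integral_le_of_norm_le_const hib
        _ = C * k := by
            congr 1
            rw [abs_of_nonneg (by linarith)]
            simp only [hb_def, hc_def]; ring
    rw [norm_smul, Real.norm_eq_abs, abs_of_nonneg (by positivity : (0:ℝ) ≤ 1/k^2)]
    calc 1/k^2 * ‖ρ c - (2:ℝ) • ρ b + ρ a‖ ≤ 1/k^2 * (C * k) := by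
          apply mul_le_mul_of_nonneg_left hnd (by positivity)
      _ = (1/k) * C := by field_simp
  -- sum up
  have hsum : k * ∑ n ∈ Finset.Icc 1 m,
      ‖(1/k^2) • (ρ (((n:ℝ)+1)*k) - (2:ℝ) • ρ ((n:ℝ)*k) + ρ (((n:ℝ)-1)*k))‖
      ≤ ∑ n ∈ Finset.Icc 1 m, ∫ s in (((n:ℝ)-1)*k)..(((n:ℝ)+1)*k), ‖ρ'' s‖ := by
    calc k * ∑ n ∈ Finset.Icc 1 m,
        ‖(1/k^2) • (ρ (((n:ℝ)+1)*k) - (2:ℝ) • ρ ((n:ℝ)*k) + ρ (((n:ℝ)-1)*k))‖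
        ≤ k * ∑ n ∈ Finset.Icc 1 m,
            (1/k) * ∫ s in (((n:ℝ)-1)*k)..(((n:ℝ)+1)*k), ‖ρ'' s‖ :=
          mul_le_mul_of_nonneg_left (Finset.sum_le_sum hbound) hk.le
      _ = ∑ n ∈ Finset.Icc 1 m, ∫ s in (((n:ℝ)-1)*k)..(((n:ℝ)+1)*k), ‖ρ'' s‖ := by
          rw [Finset.mul_sum]
          apply Finset.sum_congr rfl
          intro n _
          field_simp
  refine hsum.trans ?_
  -- split each C_n and telescope
  have hsplit : ∀ n ∈ Finset.Icc 1 m,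
      (∫ s in (((n:ℝ)-1)*k)..(((n:ℝ)+1)*k), ‖ρ'' s‖)
        = (∫ s in (((n:ℝ)-1)*k)..((n:ℝ)*k), ‖ρ'' s‖)
          + ∫ s in ((n:ℝ)*k)..(((n:ℝ)+1)*k), ‖ρ'' s‖ := by
    intro n hn
    rw [Finset.mem_Icc] at hn
    have hn1 : (1:ℝ) ≤ (n:ℝ) := by exact_mod_cast hn.1
    have hnm : (n:ℝ) ≤ (m:ℝ) := by exact_mod_cast hn.2
    exact (intervalIntegral.integral_add_adjacent_intervals
      (hgint _ _ (by nlinarith) (by nlinarith) (by nlinarith) (by nlinarith))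
      (hgint _ _ (by nlinarith) (by nlinarith) (by nlinarith) (by nlinarith))).symm
  rw [Finset.sum_congr rfl hsplit, Finset.sum_add_distrib]
  -- telescoping
  have hint_i : ∀ i, i < m → IntervalIntegrable (fun s => ‖ρ'' s‖) volume
      ((i:ℝ)*k) (((i:ℝ)+1)*k) := by
    intro i hi
    have him : (i:ℝ) + 1 ≤ (m:ℝ) := by exact_mod_cast Nat.succ_le_of_lt hi
    exact hgint _ _ (by positivity) (by positivity) (by nlinarith) (by nlinarith)
  have htel1 : (∑ n ∈ Finset.Icc 1 m, ∫ s in (((n:ℝ)-1)*k)..((n:ℝ)*k), ‖ρ'' s‖)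
      = ∫ s in (0:ℝ)..((m:ℝ)*k), ‖ρ'' s‖ := by
    rw [show Finset.Icc 1 m = Finset.Ico 1 (m+1) by rw [Finset.Ico_add_one_right_eq_Icc],
      Finset.sum_Ico_eq_sum_range]
    simp only [Nat.add_sub_cancel]
    have := intervalIntegral.sum_integral_adjacent_intervals
      (a := fun i => (i:ℝ)*k) (μ := volume) (f := fun s => ‖ρ'' s‖) (n := m)
      (fun i hi => by
        show IntervalIntegrable _ volume ((i:ℝ)*k) ((((i+1:ℕ)):ℝ)*k)
        push_cast
        exact hint_i i hi)
    simp only [Nat.cast_zero, zero_mul] at this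
    rw [← this]
    refine Finset.sum_congr rfl fun i _ => ?_
    congr 1 <;> push_cast <;> ring
  have htel2 : (∑ n ∈ Finset.Icc 1 m, ∫ s in ((n:ℝ)*k)..(((n:ℝ)+1)*k), ‖ρ'' s‖)
      = ∫ s in k..(((m:ℝ)+1)*k), ‖ρ'' s‖ := by
    rw [show Finset.Icc 1 m = Finset.Ico 1 (m+1) by rw [Finset.Ico_add_one_right_eq_Icc],
      Finset.sum_Ico_eq_sum_range]
    simp only [Nat.add_sub_cancel]
    have := intervalIntegral.sum_integral_adjacent_intervals
      (a := fun i => ((i:ℝ)+1)*k) (μ := volume) (f := fun s => ‖ρ'' s‖) (n := m)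
      (fun i hi => by
        have him : (i:ℝ) + 1 ≤ (m:ℝ) := by exact_mod_cast Nat.succ_le_of_lt hi
        show IntervalIntegrable _ volume (((i:ℝ)+1)*k) (((((i+1):ℕ):ℝ)+1)*k)
        push_cast
        exact hgint _ _ (by nlinarith) (by nlinarith) (by nlinarith) (by nlinarith))
    simp only [Nat.cast_zero, zero_add, one_mul] at this
    rw [← this]
    refine Finset.sum_congr rfl fun i _ => ?_
    congr 1 <;> push_cast <;> ring
  rw [htel1, htel2]
  -- each piece is at most the full integral
  have hmono1 : (∫ s in (0:ℝ)..((m:ℝ)*k), ‖ρ'' s‖)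
      ≤ ∫ s in (0:ℝ)..(((m:ℝ)+1)*k), ‖ρ'' s‖ :=
    intervalIntegral.integral_mono_interval le_rfl (by positivity) (by nlinarith)
      (Filter.Eventually.of_forall fun x => norm_nonneg _)
      (hgint 0 _ le_rfl (by positivity) hT.le hm)
  have hmono2 : (∫ s in k..(((m:ℝ)+1)*k), ‖ρ'' s‖)
      ≤ ∫ s in (0:ℝ)..(((m:ℝ)+1)*k), ‖ρ'' s‖ :=
    intervalIntegral.integral_mono_interval hk.le (by nlinarith) le_rfl
      (Filter.Eventually.of_forall fun x => norm_nonneg _)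
      (hgint 0 _ le_rfl (by positivity) hT.le hm)
  linarith
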